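/- Let θ ∈ (0,1), H > L ≥ 0, and η ≥ 0 with √(η/(θ(1-θ))) ≤ H − L. Among all pairs (r,s) with r,s ≥ 0 satisfying θr + (1-θ)s = θH + (1-θ)L and θ(r-H)² + (1-θ)(s-L)² ≤ η, the minimum of θr³ + (1-θ)s³ equals θH³ + (1-θ)L³ − 3(H²-L²)√(θ(1-θ))·η^{1/2} + 3((1-θ)H + θL)η − ((1-2θ)/√(θ(1-θ)))·η^{3/2}. -/

import Mathlib

open Real

set_option maxHeartbeats 1000000 in
theorem third_moment_minimization (θ H L η : ℝ) (hθ : θ ∈ Set.Ioo (0 : ℝ) 1)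
    (hL : 0 ≤ L) (hHL : L < H) (hη : 0 ≤ η)
    (hsmall : Real.sqrt (η / (θ * (1 - θ))) ≤ H - L) :
    IsLeast {x : ℝ | ∃ r s : ℝ, 0 ≤ r ∧ 0 ≤ s ∧
        θ * r + (1 - θ) * s = θ * H + (1 - θ) * L ∧
        θ * (r - H) ^ 2 + (1 - θ) * (s - L) ^ 2 ≤ η ∧
        x = θ * r ^ 3 + (1 - θ) * s ^ 3}
      (θ * H ^ 3 + (1 - θ) * L ^ 3
        - 3 * (H ^ 2 - L ^ 2) * Real.sqrt (θ * (1 - θ)) * Real.sqrt η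
        + 3 * ((1 - θ) * H + θ * L) * η
        - ((1 - 2 * θ) / Real.sqrt (θ * (1 - θ))) * Real.sqrt η ^ 3) := by
  obtain ⟨hθ0, hθ1⟩ := hθ
  have hθ1' : 0 < 1 - θ := by linarith
  have hc0 : 0 < Real.sqrt (θ * (1 - θ)) := Real.sqrt_pos.mpr (by positivity)
  set c := Real.sqrt (θ * (1 - θ)) with hcdef
  have hc2 : c ^ 2 = θ * (1 - θ) := Real.sq_sqrt (by positivity)
  have hex : ∃ δ : ℝ, 0 ≤ δ ∧ Real.sqrt η = c * δ ∧ δ ≤ H - L := by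
    refine ⟨Real.sqrt η / c, by positivity, by field_simp, ?_⟩
    rwa [Real.sqrt_div hη, ← hcdef] at hsmall
  obtain ⟨δ, hδ0, he, hδHL⟩ := hex
  have hη2 : η = c ^ 2 * δ ^ 2 := by
    rw [← Real.sq_sqrt hη, he]; ring
  rw [he, hη2]
  have hdiv : ((1 - 2 * θ) / c) * (c * δ) ^ 3 = (1 - 2 * θ) * c ^ 2 * δ ^ 3 := by
    field_simp
  have htarget : θ * H ^ 3 + (1 - θ) * L ^ 3
        - 3 * (H ^ 2 - L ^ 2) * c * (c * δ)
        + 3 * ((1 - θ) * H + θ * L) * (c ^ 2 * δ ^ 2)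
        - ((1 - 2 * θ) / c) * (c * δ) ^ 3
      = θ * (H - (1 - θ) * δ) ^ 3 + (1 - θ) * (L + θ * δ) ^ 3 := by
    rw [hdiv]
    linear_combination (-3 * (H ^ 2 - L ^ 2) * δ + 3 * ((1 - θ) * H + θ * L) * δ ^ 2
      - (1 - 2 * θ) * δ ^ 3) * hc2
  rw [htarget]
  have hB : 0 ≤ H - (1 - θ) * δ := by nlinarith [mul_nonneg hθ1'.le (by linarith : (0:ℝ) ≤ H - L - δ)]
  constructor
  · refine ⟨H - (1 - θ) * δ, L + θ * δ, hB, by positivity, by ring, ?_, rfl⟩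
    have : θ * (H - (1 - θ) * δ - H) ^ 2 + (1 - θ) * (L + θ * δ - L) ^ 2 = c ^ 2 * δ ^ 2 := by
      linear_combination (-δ ^ 2) * hc2
    linarith [this.le]
  · rintro x ⟨r, s, hr, hs, hlin, hquad, rfl⟩
    set t := (s - L) / θ with htdef
    have hst : s = L + θ * t := by rw [htdef]; field_simp; ring
    have hrt : r = H - (1 - θ) * t := by
      have : θ * r = θ * (H - (1 - θ) * t) := by rw [hst] at hlin; linarith
      exact mul_left_cancel₀ (ne_of_gt hθ0) this
    have hpos0 : 0 < θ * (1 - θ) := by positivity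
    have hquad' : θ * (1 - θ) * t ^ 2 ≤ θ * (1 - θ) * δ ^ 2 := by
      rw [hrt, hst] at hquad
      have hexp : θ * (H - (1 - θ) * t - H) ^ 2 + (1 - θ) * (L + θ * t - L) ^ 2
          = θ * (1 - θ) * t ^ 2 := by ring
      rw [hexp] at hquad
      calc θ * (1 - θ) * t ^ 2 ≤ c ^ 2 * δ ^ 2 := hquad
        _ = θ * (1 - θ) * δ ^ 2 := by rw [hc2]
    have ht2 : t ^ 2 ≤ δ ^ 2 := (mul_le_mul_iff_right₀ hpos0).mp hquad'
    have htδ : t ≤ δ := by nlinarith [sq_nonneg (t - δ), sq_nonneg (t + δ)]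
    rw [hrt, hst]
    have hC : 0 ≤ L + θ * t := hst ▸ hs
    have hA : 0 ≤ H - L - δ := by linarith
    have hD : 0 ≤ δ - t := by linarith
    have hid : θ * (H - (1 - θ) * t) ^ 3 + (1 - θ) * (L + θ * t) ^ 3
        - (θ * (H - (1 - θ) * δ) ^ 3 + (1 - θ) * (L + θ * δ) ^ 3)
      = 3 * (θ * (1 - θ) * ((H - L - δ) * (H - (1 - θ) * δ) * (δ - t)))
        + 3 * (θ * (1 - θ) * ((H - L - δ) * (L + θ * t) * (δ - t)))
        + (3/2) * (θ * (1 - θ) * ((H - L - δ) * (δ - t) ^ 2))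
        + (3/2) * (θ * (1 - θ) * ((H - (1 - θ) * δ) * (δ - t) ^ 2))
        + (3/2) * (θ * (1 - θ) * ((L + θ * t) * (δ - t) ^ 2))
        + (1/2) * (θ * (1 - θ) * ((2 - θ) * (δ - t) ^ 2 * (δ - t))) := by ring
    have hpos : 0 < θ * (1 - θ) := by positivity
    have P1 : 0 ≤ θ * (1 - θ) * ((H - L - δ) * (H - (1 - θ) * δ) * (δ - t)) :=
      mul_nonneg hpos.le (mul_nonneg (mul_nonneg hA hB) hD)
    have P2 : 0 ≤ θ * (1 - θ) * ((H - L - δ) * (L + θ * t) * (δ - t)) :=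
      mul_nonneg hpos.le (mul_nonneg (mul_nonneg hA hC) hD)
    have P3 : 0 ≤ θ * (1 - θ) * ((H - L - δ) * (δ - t) ^ 2) :=
      mul_nonneg hpos.le (mul_nonneg hA (sq_nonneg _))
    have P4 : 0 ≤ θ * (1 - θ) * ((H - (1 - θ) * δ) * (δ - t) ^ 2) :=
      mul_nonneg hpos.le (mul_nonneg hB (sq_nonneg _))
    have P5 : 0 ≤ θ * (1 - θ) * ((L + θ * t) * (δ - t) ^ 2) :=
      mul_nonneg hpos.le (mul_nonneg hC (sq_nonneg _))
    have P6 : 0 ≤ θ * (1 - θ) * ((2 - θ) * (δ - t) ^ 2 * (δ - t)) :=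
      mul_nonneg hpos.le (mul_nonneg (mul_nonneg (by linarith) (sq_nonneg _)) hD)
    linarith [hid, P1, P2, P3, P4, P5, P6]
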